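/- Let n be a positive integer and a ≠ 0 a real number. For the planar vector field Z(r, w) = (r((2n+1)(1 + ar) − a(2n+1) r w^{2n} + r² w^{2n}), w(−1 + ar(−1 + w^{2n}))) obtained from the degenerate singular point of the chart U₂ by the blow-up x = w^{2n} r, z = w and division by the common factor w^{2n}, the zeros of Z on the line w = 0 are exactly the two points (0, 0) and (−1/a, 0); the Jacobian matrix of Z at (0, 0) is the diagonal matrix diag(2n+1, −1), so (0, 0) is a hyperbolic saddle, and the Jacobian matrix of Z at (−1/a, 0) is the diagonal matrix diag(−(2n+1), 0), so (−1/a, 0) is a semi-hyperbolic singular point. -/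

import Mathlib

/-- The vector field obtained from the degenerate singular point of the chart `U₂` by
the blow-up `x = w^(2n) r`, `z = w` and division by the common factor `w^(2n)`:
`Z (r, w) = (r ((2n+1)(1 + a r) - a (2n+1) r w^(2n) + r² w^(2n)),
             w (-1 + a r (-1 + w^(2n))))`. -/
noncomputable def blowUpField (n : ℕ) (a : ℝ) : ℝ × ℝ → ℝ × ℝ :=
  fun p => (p.1 * ((2 * n + 1) * (1 + a * p.1) - a * (2 * n + 1) * p.1 * p.2 ^ (2 * n)
              + p.1 ^ 2 * p.2 ^ (2 * n)),
            p.2 * (-1 + a * p.1 * (-1 + p.2 ^ (2 * n))))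

lemma fderiv_blowUp (n : ℕ) (hn : 0 < n) (a r0 : ℝ) :
    HasFDerivAt (blowUpField n a)
      (ContinuousLinearMap.prodMap
        (((2 * n + 1 : ℝ) * (1 + 2 * a * r0)) • ContinuousLinearMap.id ℝ ℝ)
        ((-1 - a * r0) • ContinuousLinearMap.id ℝ ℝ)) (r0, 0) := by
  have hfst : HasFDerivAt (fun p : ℝ × ℝ => p.1) (ContinuousLinearMap.fst ℝ ℝ ℝ) (r0, (0:ℝ)) :=
    hasFDerivAt_fst
  have hsnd : HasFDerivAt (fun p : ℝ × ℝ => p.2) (ContinuousLinearMap.snd ℝ ℝ ℝ) (r0, (0:ℝ)) :=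
    hasFDerivAt_snd
  have hpm : HasFDerivAt (fun p : ℝ × ℝ => p.2 ^ (2 * n)) (0 : ℝ × ℝ →L[ℝ] ℝ) (r0, (0:ℝ)) := by
    have h := (hasDerivAt_pow (2 * n) (0 : ℝ)).comp_hasFDerivAt (r0, (0:ℝ)) hsnd
    have h0 : (0 : ℝ) ^ (2 * n - 1) = 0 := zero_pow (by omega)
    simpa [Function.comp_def, h0] using h
  have ht1 : HasFDerivAt (fun p : ℝ × ℝ => (2 * n + 1 : ℝ) * (1 + a * p.1))
      ((2 * n + 1 : ℝ) • ((0 : ℝ × ℝ →L[ℝ] ℝ) + a • ContinuousLinearMap.fst ℝ ℝ ℝ)) (r0, 0) :=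
    (((hasFDerivAt_const (1:ℝ) _).add (hfst.const_mul a)).const_mul _)
  have ht2 : HasFDerivAt (fun p : ℝ × ℝ => a * (2 * n + 1 : ℝ) * p.1 * p.2 ^ (2 * n)) _ (r0, 0) :=
    (hfst.const_mul (a * (2 * n + 1 : ℝ))).mul hpm
  have ht3 : HasFDerivAt (fun p : ℝ × ℝ => p.1 ^ 2 * p.2 ^ (2 * n)) _ (r0, 0) :=
    (((hasDerivAt_pow 2 r0).comp_hasFDerivAt (f := fun p : ℝ × ℝ => p.1) (r0, (0:ℝ)) hfst)).mul hpm
  have hf1 := hfst.mul ((ht1.sub ht2).add ht3)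
  have ht4 : HasFDerivAt (fun p : ℝ × ℝ => -1 + a * p.1 * (-1 + p.2 ^ (2 * n))) _ (r0, 0) :=
    (hasFDerivAt_const (-1:ℝ) _).add ((hfst.const_mul a).mul ((hasFDerivAt_const (-1:ℝ) _).add hpm))
  have hf2 := hsnd.mul ht4
  have hd : HasFDerivAt (blowUpField n a) _ (r0, (0:ℝ)) := hf1.prodMk hf2
  refine hd.congr_fderiv ?_
  have h0 : (0 : ℝ) ^ (2 * n) = 0 := zero_pow (by omega)
  ext <;>
    simp [ContinuousLinearMap.prod_apply, h0] <;> ring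

/-- For `n ≥ 1` and `a ≠ 0`: the zeros of the blow-up field on the line `w = 0` are
exactly `(0, 0)` and `(-1/a, 0)`; the Jacobian at `(0, 0)` is `diag (2n+1, -1)`,
whose eigenvalues `2n+1 > 0` and `-1 < 0` make it a hyperbolic saddle; the Jacobian at
`(-1/a, 0)` is `diag (-(2n+1), 0)`, with one nonzero eigenvalue `-(2n+1) ≠ 0` and one
zero eigenvalue, so `(-1/a, 0)` is a semi-hyperbolic singular point. -/
theorem blowUp_singular_points (n : ℕ) (hn : 0 < n) (a : ℝ) (ha : a ≠ 0) :
    (∀ r : ℝ, blowUpField n a (r, 0) = 0 ↔ (r = 0 ∨ r = -1 / a)) ∧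
    fderiv ℝ (blowUpField n a) (0, 0) =
      ContinuousLinearMap.prodMap
        (((2 * n + 1 : ℝ)) • ContinuousLinearMap.id ℝ ℝ)
        ((-1 : ℝ) • ContinuousLinearMap.id ℝ ℝ) ∧
    (0 : ℝ) < 2 * n + 1 ∧ (-1 : ℝ) < 0 ∧
    fderiv ℝ (blowUpField n a) (-1 / a, 0) =
      ContinuousLinearMap.prodMap
        ((-(2 * n + 1 : ℝ)) • ContinuousLinearMap.id ℝ ℝ)
        (0 : ℝ →L[ℝ] ℝ) ∧
    (-(2 * n + 1 : ℝ)) ≠ 0 := by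
  have h0 : (0 : ℝ) ^ (2 * n) = 0 := zero_pow (by omega)
  have hc : (2 * n + 1 : ℝ) ≠ 0 := by positivity
  refine ⟨?_, ?_, by positivity, by norm_num, ?_, neg_ne_zero.mpr hc⟩
  · intro r
    simp only [blowUpField, h0, mul_zero, zero_mul, sub_zero, add_zero, Prod.mk_eq_zero, Prod.ext_iff]
    constructor
    · rintro ⟨h, -⟩
      rcases mul_eq_zero.1 h with h | h
      · exact Or.inl h
      · right
        have : 1 + a * r = 0 := by
          rcases mul_eq_zero.1 h with h' | h'
          · exact absurd h' hc
          · exact h'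
        field_simp
        linarith
    · rintro (rfl | rfl)
      · simp
      · constructor
        · field_simp; simp
        · rfl
  · have := (fderiv_blowUp n hn a 0).fderiv
    rw [this]; norm_num
  · have := (fderiv_blowUp n hn a (-1/a)).fderiv
    rw [this]
    have h1 : (2 * n + 1 : ℝ) * (1 + 2 * a * (-1 / a)) = -(2 * n + 1) := by field_simp; ring
    have h2 : (-1 - a * (-1 / a)) = (0 : ℝ) := by field_simp; norm_num
    rw [h1, h2, zero_smul]
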